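/- For any τ > 0 and a, b, c ∈ [0,1] satisfying |b - a| ≤ max(τ², τ·√(a(1-a))) and |c - b| ≤ max(τ², τ·√(b(1-b))), it holds that |c - a| ≤ 3·max(τ², τ·√(a(1-a))). -/
import Mathlib


theorem stmt_14 (τ a b c : ℝ) (hτ : 0 < τ)
    (ha : a ∈ Set.Icc (0:ℝ) 1) (hb : b ∈ Set.Icc (0:ℝ) 1) (hc : c ∈ Set.Icc (0:ℝ) 1)
    (hab : |b - a| ≤ max (τ^2) (τ * Real.sqrt (a * (1 - a))))
    (hbc : |c - b| ≤ max (τ^2) (τ * Real.sqrt (b * (1 - b)))) :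
    |c - a| ≤ 3 * max (τ^2) (τ * Real.sqrt (a * (1 - a))) := by
  obtain ⟨ha0, ha1⟩ := ha
  obtain ⟨hb0, hb1⟩ := hb
  set M := max (τ^2) (τ * Real.sqrt (a * (1 - a))) with hMdef
  have hM1 : τ^2 ≤ M := le_max_left _ _
  have hM2 : τ * Real.sqrt (a * (1 - a)) ≤ M := le_max_right _ _
  have hM0 : 0 ≤ M := le_trans (sq_nonneg τ) hM1
  have hd := abs_sub_abs_le_abs_sub b a
  have hd1 : b - a ≤ |b - a| := le_abs_self _
  have hd2 : -(b - a) ≤ |b - a| := neg_le_abs _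
  have key : b * (1 - b) ≤ a * (1 - a) + M := by
    nlinarith [abs_nonneg (b - a), sq_nonneg (b - a)]
  have haa : 0 ≤ a * (1 - a) := mul_nonneg ha0 (by linarith)
  have hsb : Real.sqrt (b * (1 - b)) ≤ Real.sqrt (a * (1 - a)) + Real.sqrt M := by
    calc Real.sqrt (b * (1 - b)) ≤ Real.sqrt (a * (1 - a) + M) := Real.sqrt_le_sqrt key
      _ ≤ Real.sqrt (a * (1 - a)) + Real.sqrt M := by
          have h := Real.sqrt_le_sqrt (show a * (1 - a) + M ≤
              (Real.sqrt (a * (1 - a)) + Real.sqrt M)^2 by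
            nlinarith [Real.sq_sqrt haa, Real.sq_sqrt hM0,
              mul_nonneg (Real.sqrt_nonneg (a * (1 - a))) (Real.sqrt_nonneg M)])
          rwa [Real.sqrt_sq (add_nonneg (Real.sqrt_nonneg _) (Real.sqrt_nonneg _))] at h
  have hτM : τ ≤ Real.sqrt M := by
    rw [show τ = Real.sqrt (τ^2) by rw [Real.sqrt_sq hτ.le]]
    exact Real.sqrt_le_sqrt hM1
  have hτsqM : τ * Real.sqrt M ≤ M := by
    calc τ * Real.sqrt M ≤ Real.sqrt M * Real.sqrt M :=
          mul_le_mul_of_nonneg_right hτM (Real.sqrt_nonneg _)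
      _ = M := Real.mul_self_sqrt hM0
  have hMb : max (τ^2) (τ * Real.sqrt (b * (1 - b))) ≤ 2 * M := by
    apply max_le (by linarith)
    calc τ * Real.sqrt (b * (1 - b)) ≤ τ * (Real.sqrt (a * (1 - a)) + Real.sqrt M) :=
          mul_le_mul_of_nonneg_left hsb hτ.le
      _ = τ * Real.sqrt (a * (1 - a)) + τ * Real.sqrt M := by ring
      _ ≤ 2 * M := by linarith
  calc |c - a| ≤ |c - b| + |b - a| := abs_sub_le _ _ _
    _ ≤ 2 * M + M := add_le_add (le_trans hbc hMb) hab
    _ = 3 * M := by ring
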